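/- Assume the hierarchy S is well-formed. Then the join operator on the extended hierarchy is associative: join(join(x, y), z) = join(x, join(y, z)) for all x, y, z in the extended hierarchy. -/

import Mathlib

/-- Minimal common subclasses of `a` and `b`: the minimal elements of the set
`{c | a ≤ c ∧ b ≤ c}` of common upper bounds of `a` and `b`. -/
def mcs {S : Type*} [PartialOrder S] (a b : S) : Set S :=
  {c | Minimal (fun c => a ≤ c ∧ b ≤ c) c}

open Classical in
/-- The join operator on the extended hierarchy `WithTop S`:
`join a b = c` if `a, b ∈ S` and `mcs a b = {c}`, and `⊤` otherwise. -/
noncomputable def hjoin {S : Type*} [PartialOrder S] : WithTop S → WithTop S → WithTop S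
  | some a, some b => if h : ∃ c, mcs a b = {c} then some h.choose else ⊤
  | _, _ => ⊤

lemma hjoin_le_iff {S : Type*} [Fintype S] [PartialOrder S]
    (hwf : ∀ a b : S, (mcs a b).Subsingleton) (x y c : WithTop S) :
    hjoin x y ≤ c ↔ x ≤ c ∧ y ≤ c := by
  match x, y with
  | ⊤, y =>
    simp only [hjoin]
    exact ⟨fun h => ⟨h, le_trans le_top h⟩, fun h => h.1⟩
  | (a : S), ⊤ =>
    simp only [hjoin]
    exact ⟨fun h => ⟨le_trans le_top h, h⟩, fun h => h.2⟩
  | (a : S), (b : S) =>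
    simp only [hjoin]
    change (@dite _ _ (Classical.propDecidable _) (fun h => ((Exists.choose h : S) : WithTop S)) (fun _ => ⊤) : WithTop S) ≤ c ↔ _
    split
    · rename_i h
      have hm : h.choose ∈ mcs a b := by
        have : h.choose ∈ ({h.choose} : Set S) := rfl
        rwa [← h.choose_spec] at this
      have hleast : ∀ d : S, a ≤ d → b ≤ d → h.choose ≤ d := by
        intro d had hbd
        obtain ⟨e, hed, he⟩ := exists_minimal_le_of_wellFoundedLT (P := fun c => a ≤ c ∧ b ≤ c) _
          ⟨had, hbd⟩
        have : e = h.choose := hwf a b he hm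
        exact this ▸ hed
      match c with
      | ⊤ => simp
      | (d : S) =>
        simp only [WithTop.coe_le_coe]
        exact ⟨fun h' => ⟨hm.1.1.trans h',
            hm.1.2.trans h'⟩,
          fun ⟨h1, h2⟩ => hleast d h1 h2⟩
    · rename_i h
      simp only [top_le_iff]
      constructor
      · rintro rfl; exact ⟨le_top, le_top⟩
      · rintro ⟨h1, h2⟩
        match c with
        | ⊤ => rfl
        | (d : S) =>
          exfalso
          obtain ⟨e, -, he⟩ := exists_minimal_le_of_wellFoundedLT (P := fun c => a ≤ c ∧ b ≤ c) _
            ⟨WithTop.coe_le_coe.mp h1, WithTop.coe_le_coe.mp h2⟩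
          exact h ⟨e, Set.eq_singleton_iff_unique_mem.mpr ⟨he, fun x hx => hwf a b hx he⟩⟩

/-- In a well-formed hierarchy, the join operator is associative. -/
theorem hjoin_assoc {S : Type*} [Fintype S] [PartialOrder S]
    (hwf : ∀ a b : S, (mcs a b).Subsingleton) (x y z : WithTop S) :
    hjoin (hjoin x y) z = hjoin x (hjoin y z) := by
  have key : ∀ c, hjoin (hjoin x y) z ≤ c ↔ hjoin x (hjoin y z) ≤ c := by
    intro c
    rw [hjoin_le_iff hwf, hjoin_le_iff hwf, hjoin_le_iff hwf, hjoin_le_iff hwf, and_assoc]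
  exact le_antisymm ((key _).mpr le_rfl) ((key _).mp le_rfl)
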